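/- For a = 1/2, λ = 1, and β > 0, the approximation error of the squashing function is bounded: |S^{(β)}_{1/2,1}(x) - [x]| ≤ (ln 2)/β for all real x, where [·] is the cutting function. -/

import Mathlib

noncomputable def cut (x : ℝ) : ℝ := max 0 (min 1 x)

noncomputable def squash (β x : ℝ) : ℝ :=
  (1 / β) * Real.log ((1 + Real.exp (β * x)) / (1 + Real.exp (β * (x - 1))))

noncomputable def gfun (y : ℝ) : ℝ := Real.log (1 + Real.exp y) - max 0 y

lemma gfun_pos (y : ℝ) : 0 < gfun y := by
  unfold gfun
  have h1 : (0:ℝ) < Real.log (1 + Real.exp y) := by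
    apply Real.log_pos; linarith [Real.exp_pos y]
  have h2 : y < Real.log (1 + Real.exp y) := by
    nth_rewrite 1 [← Real.log_exp y]
    apply Real.log_lt_log (Real.exp_pos y); linarith
  rcases le_total 0 y with h | h
  · rw [max_eq_right h]; linarith
  · rw [max_eq_left h]; linarith

lemma gfun_le (y : ℝ) : gfun y ≤ Real.log 2 := by
  unfold gfun
  rcases le_total y 0 with h | h
  · rw [max_eq_left h]
    simp only [sub_zero]
    apply Real.log_le_log (by positivity)
    have := Real.exp_le_one_iff.mpr h
    linarith
  · rw [max_eq_right h]
    have hy : Real.log (1 + Real.exp y) - y = Real.log (1 + Real.exp (-y)) := by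
      rw [← Real.log_exp y, ← Real.log_div (by positivity) (by positivity)]
      congr 1
      rw [Real.exp_neg]
      field_simp
      rw [Real.exp_log (Real.exp_pos y)]; ring
    rw [hy]
    apply Real.log_le_log (by positivity)
    have := Real.exp_le_one_iff.mpr (neg_nonpos.mpr h)
    linarith

theorem squash_error_bound (β x : ℝ) (hβ : 0 < β) :
    |squash β x - cut x| ≤ Real.log 2 / β := by
  have hb : β ≠ 0 := ne_of_gt hβ
  have hcut : β * cut x = max 0 (β * x) - max 0 (β * (x - 1)) := by
    unfold cut
    rcases le_total x 0 with h | h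
    · rw [min_eq_right (by linarith), max_eq_left h,
        max_eq_left (by nlinarith), max_eq_left (by nlinarith)]
      ring
    · rw [max_eq_right (by nlinarith : (0:ℝ) ≤ β * x)]
      rcases le_total x 1 with h1 | h1
      · rw [min_eq_right h1, max_eq_right h, max_eq_left (by nlinarith)]
        ring
      · rw [min_eq_left h1, max_eq_right (by nlinarith : (0:ℝ) ≤ β * (x - 1))]
        norm_num
        ring
  have hsq : squash β x - cut x = (gfun (β * x) - gfun (β * (x - 1))) / β := by
    unfold squash gfun
    rw [Real.log_div (by positivity) (by positivity)]
    field_simp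
    linarith [hcut]
  rw [hsq, abs_div, abs_of_pos hβ]
  rw [div_le_div_iff_of_pos_right hβ]
  rw [abs_le]
  constructor <;>
    [linarith [gfun_pos (β * x), gfun_le (β * (x - 1))];
     linarith [gfun_le (β * x), gfun_pos (β * (x - 1))]]
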